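/- Consider a finite bimatrix game where the leader plays its Stackelberg mixed strategy x* ∈ Δ(A) independently in every round, and suppose the follower's Stackelberg response b* ∈ B is the unique best response to x* with gap δ > 0, i.e., E_{a∼x*}[U_F(b*,a)] ≥ E_{a∼x*}[U_F(b,a)] + δ for every b ≠ b*. If the follower's expected per-round best-in-hindsight regret over n rounds is at most r, then the expected fraction of rounds in which the follower plays an action other than b* is at most r/δ; consequently, if all payoffs lie in [−h, h], the leader's expected per-round payoff is at least SV − 2h·r/δ, where SV = E_{a∼x*}[U_L(a,b*)] is the Stackelberg value. -/

import Mathlib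

open MeasureTheory

private lemma integrable_finset_sup'_aux {Ω β : Type*} [MeasurableSpace Ω] {μ : Measure Ω}
    {s : Finset β} (hs : s.Nonempty) (f : β → Ω → ℝ) :
    (∀ b ∈ s, Integrable (f b) μ) → Integrable (fun ω => s.sup' hs fun b => f b ω) μ := by
  induction hs using Finset.Nonempty.cons_induction with
  | singleton a => intro hf; simpa using hf a (by simp)
  | cons a t h ht ih =>
    intro hf
    have h2 := ih (fun b hb => hf b (by simp [hb]))
    have h1 : Integrable (f a) μ := hf a (by simp)
    have h3 := h1.sup h2
    have he : (fun ω => (Finset.cons a t h).sup' (Finset.cons_nonempty h) fun b => f b ω)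
        = (f a ⊔ fun ω => t.sup' ht fun b => f b ω) := by
      funext ω
      rw [Finset.sup'_cons]
      rfl
    rw [he]
    exact h3

/-- Suppose the leader plays its Stackelberg mixed strategy `x*`
independently in every round (so in each round `i`, the leader's action `a^i ∼ x*` is
independent of the follower's simultaneous action `b^i`), and the follower's Stackelberg
response `b*` is the unique best response to `x*` with gap `δ > 0`.  If the follower's
expected per-round best-in-hindsight regret over `n` rounds is at most `r`, then the
expected fraction of rounds in which the follower plays an action other than `b*` is at
most `r/δ`; consequently, if all payoffs lie in `[-h,h]`, the leader's expected
per-round payoff is at least `SV - 2h·r/δ` where `SV = E_{a∼x*}[U_L(a,b*)]`. -/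
theorem static_stackelberg_vs_no_regret_follower
    (A B : Type*) [Fintype A] [Fintype B] [Nonempty A] [Nonempty B] [DecidableEq B]
    [MeasurableSpace A] [MeasurableSpace B]
    {Ω : Type*} [MeasurableSpace Ω] (μ : Measure Ω) [IsProbabilityMeasure μ]
    (n : ℕ) (hn : 0 < n)
    (UL : A → B → ℝ) (UF : B → A → ℝ)
    (x : A → ℝ) (hx0 : ∀ a, 0 ≤ x a) (hx1 : ∑ a, x a = 1)
    (bstar : B) (δ : ℝ) (hδ : 0 < δ)
    (hgap : ∀ b : B, b ≠ bstar →
      ∑ a, x a * UF bstar a ≥ (∑ a, x a * UF b a) + δ)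
    (h r : ℝ) (hpay : ∀ a b, |UL a b| ≤ h ∧ |UF b a| ≤ h)
    (act : Fin n → Ω → A) (bb : Fin n → Ω → B)
    (hma : ∀ i, Measurable (act i)) (hmb : ∀ i, Measurable (bb i))
    -- in each round, the leader's action is distributed as `x*`, independently of the
    -- follower's action in that round
    (hdist : ∀ (i : Fin n) (b : B) (g : A → ℝ),
      ∫ ω, g (act i ω) * (if bb i ω = b then (1 : ℝ) else 0) ∂μ
        = (∑ a, x a * g a) * (μ {ω | bb i ω = b}).toReal)
    -- the follower's expected per-round best-in-hindsight regret is at most `r`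
    (hreg : ∫ ω,
        ((1 : ℝ) / n) *
          ((Finset.univ.sup' Finset.univ_nonempty fun b : B => ∑ i, UF b (act i ω))
            - ∑ i, UF (bb i ω) (act i ω)) ∂μ ≤ r) :
    (∫ ω, ((Finset.univ.filter fun i : Fin n => bb i ω ≠ bstar).card : ℝ) / n ∂μ
        ≤ r / δ)
    ∧ ((1 : ℝ) / n) * ∫ ω, (∑ i, UL (act i ω) (bb i ω)) ∂μ
        ≥ (∑ a, x a * UL a bstar) - 2 * h * r / δ := by
  classical
  have hn' : ((n : ℝ)) ≠ 0 := Nat.cast_ne_zero.mpr hn.ne'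
  have hninv : (0:ℝ) ≤ 1 / n := by positivity
  -- indicators are integrable
  have hind : ∀ (i : Fin n) (b : B),
      Integrable (fun ω => if bb i ω = b then (1:ℝ) else 0) μ := by
    intro i b
    by_contra hni
    have h0 : ∫ ω, (if bb i ω = b then (1:ℝ) else 0) ∂μ = 0 := integral_undef hni
    have h1 := hdist i b (fun _ => 1)
    simp only [one_mul, mul_one] at h1
    rw [hx1, one_mul, h0] at h1
    have hz : μ {ω | bb i ω = b} = 0 := by
      rcases (ENNReal.toReal_eq_zero_iff _).mp h1.symm with hh | hh
      · exact hh
      · exact absurd hh (measure_ne_top μ _)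
    have hae : (fun ω => if bb i ω = b then (1:ℝ) else 0) =ᵐ[μ] fun _ => 0 := by
      refine Filter.eventuallyEq_of_mem (s := {ω | bb i ω = b}ᶜ) ?_ ?_
      · rw [mem_ae_iff]; simpa using hz
      · intro ω hω
        simp only [Set.mem_compl_iff, Set.mem_setOf_eq] at hω
        simp [hω]
    exact hni ((integrable_congr hae).mpr (integrable_const 0))
  -- general product functions are integrable
  have hF : ∀ (i : Fin n) (b : B) (g : A → ℝ),
      Integrable (fun ω => g (act i ω) * (if bb i ω = b then (1:ℝ) else 0)) μ := by
    intro i b g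
    rcases eq_or_ne (μ {ω | bb i ω = b}) 0 with hz | hz
    · have hae : (fun ω => g (act i ω) * (if bb i ω = b then (1:ℝ) else 0)) =ᵐ[μ] fun _ => 0 := by
        refine Filter.eventuallyEq_of_mem (s := {ω | bb i ω = b}ᶜ) ?_ ?_
        · rw [mem_ae_iff]; simpa using hz
        · intro ω hω
          simp only [Set.mem_compl_iff, Set.mem_setOf_eq] at hω
          simp [hω]
      exact (integrable_congr hae).mpr (integrable_const 0)
    · set c : ℝ := 1 + |∑ a, x a * g a| with hc
      have hcpos : 0 < (∑ a, x a * g a) + c := by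
        have := neg_abs_le (∑ a, x a * g a)
        rw [hc]; linarith
      have hsum : (∑ a, x a * (g a + c)) = (∑ a, x a * g a) + c := by
        simp only [mul_add, Finset.sum_add_distrib, ← Finset.sum_mul, hx1, one_mul]
      have h2 := hdist i b (fun a => g a + c)
      simp only [hsum] at h2
      have hPc : (0:ℝ) < (μ {ω | bb i ω = b}).toReal :=
        ENNReal.toReal_pos hz (measure_ne_top μ _)
      have hne : ∫ ω, (g (act i ω) + c) * (if bb i ω = b then (1:ℝ) else 0) ∂μ ≠ 0 := by
        rw [h2]; exact ne_of_gt (mul_pos hcpos hPc)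
      have hint : Integrable (fun ω => (g (act i ω) + c) * (if bb i ω = b then (1:ℝ) else 0)) μ := by
        by_contra hni; exact hne (integral_undef hni)
      have h4 := hint.sub ((hind i b).const_mul c)
      exact h4.congr (Filter.Eventually.of_forall fun ω => by simp only [Pi.sub_apply]; ring)
  -- value of indicator integrals
  have hindval : ∀ (i : Fin n) (b : B),
      ∫ ω, (if bb i ω = b then (1:ℝ) else 0) ∂μ = (μ {ω | bb i ω = b}).toReal := by
    intro i b
    have h1 := hdist i b (fun _ => 1)
    simp only [one_mul, mul_one] at h1
    rw [hx1, one_mul] at h1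
    exact h1
  -- the probabilities sum to one
  have hP1 : ∀ i : Fin n, (∑ b, (μ {ω | bb i ω = b}).toReal) = 1 := by
    intro i
    have h1 := integral_finset_sum (μ := μ) Finset.univ
      (f := fun (b : B) ω => if bb i ω = b then (1:ℝ) else 0) (fun b _ => hind i b)
    have hone : ∀ ω : Ω, (∑ b, if bb i ω = b then (1:ℝ) else 0) = 1 := by
      intro ω; simp [Finset.sum_ite_eq]
    simp only [hone, integral_const, measure_univ, probReal_univ, ENNReal.toReal_one, smul_eq_mul,
      mul_one, one_smul, hindval] at h1
    exact h1.symm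
  have hPnn : ∀ (i : Fin n) (b : B), (0:ℝ) ≤ (μ {ω | bb i ω = b}).toReal :=
    fun i b => ENNReal.toReal_nonneg
  -- compositions g ∘ act i are integrable with integral ∑ x a * g a
  have hgdecomp : ∀ (i : Fin n) (g : A → ℝ), (fun ω => g (act i ω))
      = fun ω => ∑ b, g (act i ω) * (if bb i ω = b then (1:ℝ) else 0) := by
    intro i g; funext ω; simp [← Finset.mul_sum, Finset.sum_ite_eq]
  have hg : ∀ (i : Fin n) (g : A → ℝ), Integrable (fun ω => g (act i ω)) μ := by
    intro i g
    rw [hgdecomp i g]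
    exact integrable_finset_sum _ fun b _ => hF i b g
  have hgval : ∀ (i : Fin n) (g : A → ℝ), ∫ ω, g (act i ω) ∂μ = ∑ a, x a * g a := by
    intro i g
    rw [hgdecomp i g, integral_finset_sum _ fun b _ => hF i b g]
    simp only [hdist]
    rw [← Finset.mul_sum, hP1 i, mul_one]
  -- UF composite with follower action: decomposition, integrability, value
  have hTdec : ∀ (i : Fin n), (fun ω => UF (bb i ω) (act i ω))
      = fun ω => ∑ b, UF b (act i ω) * (if bb i ω = b then (1:ℝ) else 0) := by
    intro i; funext ω
    simp [mul_ite, mul_one, mul_zero, Finset.sum_ite_eq]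
  have hTint : ∀ i : Fin n, Integrable (fun ω => UF (bb i ω) (act i ω)) μ := by
    intro i; rw [hTdec i]
    exact integrable_finset_sum _ fun b _ => hF i b (fun a => UF b a)
  have hTval : ∀ i : Fin n, ∫ ω, UF (bb i ω) (act i ω) ∂μ
      = ∑ b, (∑ a, x a * UF b a) * (μ {ω | bb i ω = b}).toReal := by
    intro i
    rw [hTdec i, integral_finset_sum _ fun b _ => hF i b (fun a => UF b a)]
    simp only [hdist]
  -- same for UL
  have hLdec : ∀ (i : Fin n), (fun ω => UL (act i ω) (bb i ω))
      = fun ω => ∑ b, UL (act i ω) b * (if bb i ω = b then (1:ℝ) else 0) := by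
    intro i; funext ω
    simp [mul_ite, mul_one, mul_zero, Finset.sum_ite_eq]
  have hLint : ∀ i : Fin n, Integrable (fun ω => UL (act i ω) (bb i ω)) μ := by
    intro i; rw [hLdec i]
    exact integrable_finset_sum _ fun b _ => hF i b (fun a => UL a b)
  have hLval : ∀ i : Fin n, ∫ ω, UL (act i ω) (bb i ω) ∂μ
      = ∑ b, (∑ a, x a * UL a b) * (μ {ω | bb i ω = b}).toReal := by
    intro i
    rw [hLdec i, integral_finset_sum _ fun b _ => hF i b (fun a => UL a b)]
    exact Finset.sum_congr rfl fun b _ => hdist i b (fun a => UL a b)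
  -- the regret integrand is integrable and dominates the bstar-comparison integrand
  have hSint : Integrable (fun ω =>
      Finset.univ.sup' Finset.univ_nonempty fun b : B => ∑ i, UF b (act i ω)) μ :=
    integrable_finset_sup'_aux Finset.univ_nonempty _
      (fun b _ => integrable_finset_sum _ fun i _ => hg i (UF b))
  have hGint : Integrable (fun ω =>
      ((1:ℝ)/n) * ∑ i, (UF bstar (act i ω) - UF (bb i ω) (act i ω))) μ :=
    (integrable_finset_sum _ fun i _ => (hg i (UF bstar)).sub (hTint i)).const_mul _
  have hRint : Integrable (fun ω =>
      ((1:ℝ)/n) * ((Finset.univ.sup' Finset.univ_nonempty fun b : B => ∑ i, UF b (act i ω))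
        - ∑ i, UF (bb i ω) (act i ω))) μ :=
    (hSint.sub (integrable_finset_sum _ fun i _ => hTint i)).const_mul _
  have hGR : ∀ ω, ((1:ℝ)/n) * ∑ i, (UF bstar (act i ω) - UF (bb i ω) (act i ω))
      ≤ ((1:ℝ)/n) * ((Finset.univ.sup' Finset.univ_nonempty fun b : B => ∑ i, UF b (act i ω))
        - ∑ i, UF (bb i ω) (act i ω)) := by
    intro ω
    apply mul_le_mul_of_nonneg_left _ hninv
    rw [Finset.sum_sub_distrib]
    have := Finset.le_sup' (fun b : B => ∑ i, UF b (act i ω)) (Finset.mem_univ bstar)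
    linarith
  have hGle : ∫ ω, ((1:ℝ)/n) * ∑ i, (UF bstar (act i ω) - UF (bb i ω) (act i ω)) ∂μ ≤ r :=
    (integral_mono hGint hRint hGR).trans hreg
  -- compute the comparison integral
  have hGval : ∫ ω, ((1:ℝ)/n) * ∑ i, (UF bstar (act i ω) - UF (bb i ω) (act i ω)) ∂μ
      = ((1:ℝ)/n) * ∑ i, ∑ b, ((∑ a, x a * UF bstar a) - (∑ a, x a * UF b a))
          * (μ {ω | bb i ω = b}).toReal := by
    rw [integral_const_mul, integral_finset_sum (μ := μ) Finset.univ
      (f := fun (i : Fin n) ω => UF bstar (act i ω) - UF (bb i ω) (act i ω))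
      (fun i _ => (hg i (UF bstar)).sub (hTint i))]
    congr 1
    refine Finset.sum_congr rfl fun i _ => ?_
    rw [integral_sub (hg i (UF bstar)) (hTint i), hgval i (UF bstar), hTval i]
    have hterm : ∀ b : B, ((∑ a, x a * UF bstar a) - (∑ a, x a * UF b a)) * (μ {ω | bb i ω = b}).toReal
        = (∑ a, x a * UF bstar a) * (μ {ω | bb i ω = b}).toReal
          - (∑ a, x a * UF b a) * (μ {ω | bb i ω = b}).toReal := fun b => by ring
    simp only [hterm]
    rw [Finset.sum_sub_distrib, ← Finset.mul_sum, hP1 i, mul_one]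
  -- Q : expected fraction of non-bstar rounds
  set Q : ℝ := ((1:ℝ)/n) * ∑ i : Fin n, ∑ b ∈ Finset.univ.filter (fun b : B => b ≠ bstar),
      (μ {ω | bb i ω = b}).toReal with hQdef
  have hδQ : δ * Q ≤ r := by
    refine le_trans ?_ (hGval ▸ hGle)
    rw [hQdef, ← mul_assoc, mul_comm δ ((1:ℝ)/n), mul_assoc, Finset.mul_sum]
    apply mul_le_mul_of_nonneg_left _ hninv
    refine Finset.sum_le_sum fun i _ => ?_
    rw [Finset.mul_sum]
    refine le_trans (Finset.sum_le_sum fun b hb => ?_)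
      (Finset.sum_le_sum_of_subset_of_nonneg (Finset.subset_univ _) fun b _ hb => ?_)
    · rcases Finset.mem_filter.mp hb with ⟨-, hbne⟩
      exact mul_le_mul_of_nonneg_right (by linarith [hgap b hbne]) (hPnn i b)
    · have hbb : b = bstar := by
        by_contra hne
        exact hb (Finset.mem_filter.mpr ⟨Finset.mem_univ b, hne⟩)
      subst hbb
      simp
  have hQle : Q ≤ r / δ := by
    rw [le_div_iff₀ hδ]
    linarith [hδQ, mul_comm δ Q]
  -- first goal
  have goal1 : ∫ ω, ((Finset.univ.filter fun i : Fin n => bb i ω ≠ bstar).card : ℝ) / n ∂μ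
      ≤ r / δ := by
    have hcard : ∀ ω, ((Finset.univ.filter fun i : Fin n => bb i ω ≠ bstar).card : ℝ)
        = ∑ i : Fin n, ∑ b ∈ Finset.univ.filter (fun b : B => b ≠ bstar),
            (if bb i ω = b then (1:ℝ) else 0) := by
      intro ω
      rw [Finset.card_filter]
      push_cast
      refine Finset.sum_congr rfl fun i _ => ?_
      rw [Finset.sum_ite_eq]
      simp [Finset.mem_filter]
    have hfun : (fun ω => ((Finset.univ.filter fun i : Fin n => bb i ω ≠ bstar).card : ℝ) / n)
        = fun ω => ((1:ℝ)/n) * ∑ i : Fin n, ∑ b ∈ Finset.univ.filter (fun b : B => b ≠ bstar),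
            (if bb i ω = b then (1:ℝ) else 0) := by
      funext ω; rw [hcard ω]; ring
    rw [hfun, integral_const_mul,
      integral_finset_sum _ fun i _ => integrable_finset_sum _ fun b _ => hind i b]
    have : ∀ i : Fin n, ∫ ω, ∑ b ∈ Finset.univ.filter (fun b : B => b ≠ bstar),
        (if bb i ω = b then (1:ℝ) else 0) ∂μ
        = ∑ b ∈ Finset.univ.filter (fun b : B => b ≠ bstar), (μ {ω | bb i ω = b}).toReal := by
      intro i
      rw [integral_finset_sum _ fun b _ => hind i b]
      exact Finset.sum_congr rfl fun b _ => hindval i b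
    simp only [this]
    exact hQle
  refine ⟨goal1, ?_⟩
  -- second goal
  have hh0 : (0:ℝ) ≤ h := by
    obtain a := Classical.arbitrary A
    obtain b := Classical.arbitrary B
    exact le_trans (abs_nonneg _) (hpay a b).1
  have hLbd : ∀ b : B, |∑ a, x a * UL a b| ≤ h := by
    intro b
    refine le_trans (Finset.abs_sum_le_sum_abs _ _) ?_
    calc ∑ a, |x a * UL a b| ≤ ∑ a, x a * h := by
          refine Finset.sum_le_sum fun a _ => ?_
          rw [abs_mul, abs_of_nonneg (hx0 a)]
          exact mul_le_mul_of_nonneg_left (hpay a b).1 (hx0 a)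
      _ = h := by rw [← Finset.sum_mul, hx1, one_mul]
  -- per-round lower bound for the leader's payoff
  have hround : ∀ i : Fin n,
      (∑ a, x a * UL a bstar)
        - 2 * h * ∑ b ∈ Finset.univ.filter (fun b : B => b ≠ bstar), (μ {ω | bb i ω = b}).toReal
      ≤ ∑ b, (∑ a, x a * UL a b) * (μ {ω | bb i ω = b}).toReal := by
    intro i
    have hsplit : ∑ b, (∑ a, x a * UL a b) * (μ {ω | bb i ω = b}).toReal
        = (∑ a, x a * UL a bstar)
          - ∑ b, ((∑ a, x a * UL a bstar) - (∑ a, x a * UL a b)) * (μ {ω | bb i ω = b}).toReal := by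
      rw [eq_sub_iff_add_eq, ← Finset.sum_add_distrib]
      have : ∀ b : B, (∑ a, x a * UL a b) * (μ {ω | bb i ω = b}).toReal
          + ((∑ a, x a * UL a bstar) - (∑ a, x a * UL a b)) * (μ {ω | bb i ω = b}).toReal
          = (∑ a, x a * UL a bstar) * (μ {ω | bb i ω = b}).toReal := fun b => by ring
      simp only [this]
      rw [← Finset.mul_sum, hP1 i, mul_one]
    rw [hsplit]
    have hdrop : ∑ b, ((∑ a, x a * UL a bstar) - (∑ a, x a * UL a b)) * (μ {ω | bb i ω = b}).toReal
        = ∑ b ∈ Finset.univ.filter (fun b : B => b ≠ bstar),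
            ((∑ a, x a * UL a bstar) - (∑ a, x a * UL a b)) * (μ {ω | bb i ω = b}).toReal := by
      symm
      refine Finset.sum_filter_of_ne fun b _ hne => ?_
      intro hbb
      subst hbb
      simp at hne
    rw [hdrop]
    have hbound : ∑ b ∈ Finset.univ.filter (fun b : B => b ≠ bstar),
        ((∑ a, x a * UL a bstar) - (∑ a, x a * UL a b)) * (μ {ω | bb i ω = b}).toReal
        ≤ ∑ b ∈ Finset.univ.filter (fun b : B => b ≠ bstar),
            2 * h * (μ {ω | bb i ω = b}).toReal := by
      refine Finset.sum_le_sum fun b _ => ?_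
      refine mul_le_mul_of_nonneg_right ?_ (hPnn i b)
      have h1 := abs_le.mp (hLbd bstar)
      have h2 := abs_le.mp (hLbd b)
      linarith [h1.2, h2.1]
    rw [← Finset.mul_sum] at hbound
    linarith
  -- assemble
  have hint2 : ∫ ω, (∑ i, UL (act i ω) (bb i ω)) ∂μ
      = ∑ i : Fin n, ∑ b, (∑ a, x a * UL a b) * (μ {ω | bb i ω = b}).toReal := by
    rw [integral_finset_sum _ fun i _ => hLint i]
    exact Finset.sum_congr rfl fun i _ => hLval i
  rw [ge_iff_le, hint2]
  have hsum_lb : ∑ i : Fin n, ((∑ a, x a * UL a bstar)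
        - 2 * h * ∑ b ∈ Finset.univ.filter (fun b : B => b ≠ bstar), (μ {ω | bb i ω = b}).toReal)
      ≤ ∑ i : Fin n, ∑ b, (∑ a, x a * UL a b) * (μ {ω | bb i ω = b}).toReal :=
    Finset.sum_le_sum fun i _ => hround i
  have hexp : ((1:ℝ)/n) * ∑ i : Fin n, ((∑ a, x a * UL a bstar)
        - 2 * h * ∑ b ∈ Finset.univ.filter (fun b : B => b ≠ bstar), (μ {ω | bb i ω = b}).toReal)
      = (∑ a, x a * UL a bstar) - 2 * h * Q := by
    rw [Finset.sum_sub_distrib, Finset.sum_const, Finset.card_univ, Fintype.card_fin,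
      ← Finset.mul_sum, hQdef]
    field_simp
    ring
  have h2hQ : 2 * h * Q ≤ 2 * h * (r / δ) := by
    apply mul_le_mul_of_nonneg_left hQle
    positivity
  have hfinal : (∑ a, x a * UL a bstar) - 2 * h * r / δ
      ≤ ((1:ℝ)/n) * ∑ i : Fin n, ((∑ a, x a * UL a bstar)
        - 2 * h * ∑ b ∈ Finset.univ.filter (fun b : B => b ≠ bstar), (μ {ω | bb i ω = b}).toReal) := by
    rw [hexp, mul_div_assoc]
    linarith
  refine hfinal.trans ?_
  exact mul_le_mul_of_nonneg_left hsum_lb hninv
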